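/- Fix n ≥ 1. There exist δ > 0 and c > 0 such that for every correlation matrix C ∈ ℝ^{n×n} with ‖C − I_n‖_F < δ, |(1/n)·tr(C^{1/2}) − (1 − d(C)/8)| ≤ c·‖C − I_n‖_F³. That is, the maximal average correlation ρ̄_* = (1/n)Σ_i λ_i^{1/2} achieved by OASIS satisfies ρ̄_* = 1 − d(C)/8 + O(‖C − I_n‖³) as C → I_n. -/

import Mathlib

open Matrix BigOperators

/-- Frobenius norm of a real square matrix. -/
noncomputable def frobNorm {n : ℕ} (A : Matrix (Fin n) (Fin n) ℝ) : ℝ :=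
  Real.sqrt (∑ i, ∑ j, (A i j) ^ 2)

/-- The old Mathlib `Matrix.PosSemidef.sqrt` (removed), with its original definition. -/
noncomputable def Matrix.PosSemidef.sqrt {n : Type*} [Fintype n] [DecidableEq n]
    {A : Matrix n n ℝ} (hA : A.PosSemidef) : Matrix n n ℝ :=
  (hA.1.eigenvectorUnitary : Matrix n n ℝ) * diagonal (Real.sqrt ∘ hA.1.eigenvalues) *
    (star (hA.1.eigenvectorUnitary : Matrix n n ℝ))

/-- `d(C) = (1/n)·‖C − I‖_F²`. -/
noncomputable def dC {n : ℕ} (C : Matrix (Fin n) (Fin n) ℝ) : ℝ :=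
  (1 / (n : ℝ)) * frobNorm (C - 1) ^ 2

lemma sqrt_taylor_aux (x s : ℝ) (hx1 : -(1/2) ≤ x) (hx2 : x ≤ 1/2)
    (hs0 : 0 ≤ s) (hs2 : s^2 = 1+x) :
    |s - (1 + x/2 - x^2/8)| ≤ |x|^3 := by
  have hs : (7:ℝ)/10 ≤ s := by nlinarith
  have hp : (7:ℝ)/10 ≤ 1 + x/2 - x^2/8 := by nlinarith [sq_nonneg x]
  have hq : (7:ℝ)/5 ≤ s + (1 + x/2 - x^2/8) := by linarith
  have hqpos : (0:ℝ) < s + (1 + x/2 - x^2/8) := by linarith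
  have hid : (s - (1 + x/2 - x^2/8)) * (s + (1 + x/2 - x^2/8)) = x^3/8 - x^4/64 := by
    nlinarith [hs2]
  have hax : 0 ≤ |x| := abs_nonneg x
  have h1 : x ≤ |x| := le_abs_self x
  have h2 : -|x| ≤ x := neg_abs_le x
  have h3 : |x|^2 = x^2 := sq_abs x
  have ha3 : 0 ≤ |x|^3 := by positivity
  have hx3 : x^3 ≤ |x|^3 := by nlinarith
  have hx3' : -(|x|^3) ≤ x^3 := by nlinarith
  have hx4 : 0 ≤ x^4 := by positivity
  have hx4' : x^4 ≤ |x|^3/2 := by nlinarith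
  have hub : s - (1 + x/2 - x^2/8) ≤ |x|^3 := by
    have h5 : (s - (1 + x/2 - x^2/8)) * (s + (1 + x/2 - x^2/8))
        ≤ |x|^3 * (s + (1 + x/2 - x^2/8)) := by
      calc (s - (1 + x/2 - x^2/8)) * (s + (1 + x/2 - x^2/8)) = x^3/8 - x^4/64 := hid
      _ ≤ |x|^3 * (7/5) := by linarith
      _ ≤ |x|^3 * (s + (1 + x/2 - x^2/8)) := mul_le_mul_of_nonneg_left hq ha3
    exact le_of_mul_le_mul_right h5 hqpos
  have hlb : -(|x|^3) ≤ s - (1 + x/2 - x^2/8) := by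
    have h5 : (-(|x|^3)) * (s + (1 + x/2 - x^2/8))
        ≤ (s - (1 + x/2 - x^2/8)) * (s + (1 + x/2 - x^2/8)) := by
      calc (-(|x|^3)) * (s + (1 + x/2 - x^2/8)) ≤ -(|x|^3) * (7/5) :=
            mul_le_mul_of_nonpos_left hq (by linarith)
      _ ≤ x^3/8 - x^4/64 := by linarith
      _ = _ := hid.symm
    exact le_of_mul_le_mul_right h5 hqpos
  rw [abs_le]; exact ⟨hlb, hub⟩

/-- **OASIS expansion near the identity.** For every fixed `n ≥ 1` there are
`δ, c > 0` such that any correlation matrix `C` with `‖C − I‖_F < δ` satisfies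
`|(1/n)·tr(C^{1/2}) − (1 − d(C)/8)| ≤ c·‖C − I‖_F³`; i.e.
`ρ̄_* = 1 − d(C)/8 + O(‖C − I‖³)`. -/
theorem stmt_12 (n : ℕ) (hn : 1 ≤ n) :
    ∃ δ > (0 : ℝ), ∃ c > (0 : ℝ), ∀ C : Matrix (Fin n) (Fin n) ℝ,
      ∀ hC : C.PosDef, (∀ i, C i i = 1) → frobNorm (C - 1) < δ →
      |(1 / (n : ℝ)) * (hC.posSemidef.sqrt).trace - (1 - dC C / 8)|
        ≤ c * frobNorm (C - 1) ^ 3 := by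
  refine ⟨1/2, by norm_num, 1, by norm_num, ?_⟩
  intro C hC hdiag hδ
  have hnpos : (0:ℝ) < n := by exact_mod_cast hn
  have hH : C.IsHermitian := hC.isHermitian
  set U : Matrix (Fin n) (Fin n) ℝ := (hH.eigenvectorUnitary : Matrix (Fin n) (Fin n) ℝ) with hU
  set ev : Fin n → ℝ := hH.eigenvalues with hev
  have hUU : star U * U = 1 := Unitary.coe_star_mul_self hH.eigenvectorUnitary
  have hUU' : U * star U = 1 := Unitary.coe_mul_star_self hH.eigenvectorUnitary
  have key : ∀ f : Fin n → ℝ, (U * diagonal f * star U).trace = ∑ i, f i := by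
    intro f
    rw [trace_mul_cycle, hUU, Matrix.one_mul, trace_diagonal]
  have hspec : C = U * diagonal ev * star U := by
    have h := hH.spectral_theorem
    simpa [RCLike.ofReal_real_eq_id] using h
  have hsqrt : hC.posSemidef.sqrt = U * diagonal (fun i => Real.sqrt (ev i)) * star U := rfl
  -- trace of C equals n and equals sum of eigenvalues
  have htrC : ∑ i, ev i = (n : ℝ) := by
    have h1 : C.trace = ∑ i, ev i := by rw [hspec, key]
    have h2 : C.trace = (n : ℝ) := by
      simp [Matrix.trace, Matrix.diag, hdiag]
    rw [h2] at h1; exact h1.symm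
  -- C - 1 in diagonalized form
  have hC1 : C - 1 = U * diagonal (fun i => ev i - 1) * star U := by
    have h1 : (diagonal (fun i => ev i - 1) : Matrix (Fin n) (Fin n) ℝ)
        = diagonal ev - 1 := by
      rw [← diagonal_one, diagonal_sub]
    rw [h1, Matrix.mul_sub, Matrix.sub_mul, Matrix.mul_one, hUU', ← hspec]
  -- entrywise symmetry of C - 1
  have hsymm : ∀ i j, (C - 1) j i = (C - 1) i j := by
    intro i j
    have h := congrFun (congrFun hH i) j
    simp only [conjTranspose_apply, star_trivial] at h
    simp [Matrix.sub_apply, Matrix.one_apply, h, eq_comm]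
  -- Frobenius norm squared = sum of (ev i - 1)^2
  set F : ℝ := frobNorm (C - 1) with hFdef
  have hsumnn : 0 ≤ ∑ i, ∑ j, ((C - 1) i j)^2 :=
    Finset.sum_nonneg fun i _ => Finset.sum_nonneg fun j _ => sq_nonneg _
  have hFnn : 0 ≤ F := Real.sqrt_nonneg _
  have hF2 : F^2 = ∑ i, ∑ j, ((C - 1) i j)^2 := Real.sq_sqrt hsumnn
  have hmulsq : (C - 1) * (C - 1) = U * diagonal (fun i => (ev i - 1)^2) * star U := by
    rw [hC1]
    calc U * diagonal (fun i => ev i - 1) * star U * (U * diagonal (fun i => ev i - 1) * star U)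
        = U * diagonal (fun i => ev i - 1) * (star U * U) * diagonal (fun i => ev i - 1) * star U := by
          simp only [Matrix.mul_assoc]
      _ = U * (diagonal (fun i => ev i - 1) * diagonal (fun i => ev i - 1)) * star U := by
          rw [hUU]; simp only [Matrix.mul_one, Matrix.mul_assoc]
      _ = U * diagonal (fun i => (ev i - 1)^2) * star U := by
          rw [diagonal_mul_diagonal]
          simp only [← sq]
  have htr2 : ((C - 1) * (C - 1)).trace = ∑ i, (ev i - 1)^2 := by rw [hmulsq, key]
  have htr2' : ((C - 1) * (C - 1)).trace = ∑ i, ∑ j, ((C - 1) i j)^2 := by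
    simp only [Matrix.trace, Matrix.diag, Matrix.mul_apply]
    refine Finset.sum_congr rfl fun i _ => Finset.sum_congr rfl fun j _ => ?_
    rw [hsymm i j, sq]
  have hfrob : F^2 = ∑ i, (ev i - 1)^2 := by rw [hF2, ← htr2', htr2]
  -- eigenvalue deviation bounds
  have hevb : ∀ i, |ev i - 1| ≤ F := by
    intro i
    have h1 : (ev i - 1)^2 ≤ F^2 := by
      rw [hfrob]
      exact Finset.single_le_sum (f := fun j => (ev j - 1)^2)
        (fun j _ => sq_nonneg _) (Finset.mem_univ i)
    calc |ev i - 1| = Real.sqrt ((ev i - 1)^2) := (Real.sqrt_sq_eq_abs _).symm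
      _ ≤ Real.sqrt (F^2) := Real.sqrt_le_sqrt h1
      _ = F := by rw [Real.sqrt_sq hFnn]
  have hFhalf : F < 1/2 := hδ
  -- Taylor bound per eigenvalue
  have htay : ∀ i, |Real.sqrt (ev i) - (1 + (ev i - 1)/2 - (ev i - 1)^2/8)|
      ≤ F * (ev i - 1)^2 := by
    intro i
    have hxb : |ev i - 1| ≤ F := hevb i
    have hx1 : -(1/2) ≤ ev i - 1 := by
      have := neg_abs_le (ev i - 1); linarith
    have hx2 : ev i - 1 ≤ 1/2 := by
      have := le_abs_self (ev i - 1); linarith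
    have h0 : (0:ℝ) ≤ 1 + (ev i - 1) := by linarith
    have h := sqrt_taylor_aux (ev i - 1) (Real.sqrt (1 + (ev i - 1))) hx1 hx2
      (Real.sqrt_nonneg _) (Real.sq_sqrt h0)
    have he : (1 : ℝ) + (ev i - 1) = ev i := by ring
    rw [he] at h
    calc |Real.sqrt (ev i) - (1 + (ev i - 1)/2 - (ev i - 1)^2/8)| ≤ |ev i - 1|^3 := h
      _ = |ev i - 1| * |ev i - 1|^2 := by ring
      _ ≤ F * |ev i - 1|^2 := by
          have : (0:ℝ) ≤ |ev i - 1|^2 := sq_nonneg _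
          exact mul_le_mul_of_nonneg_right hxb this
      _ = F * (ev i - 1)^2 := by rw [sq_abs]
  -- sum the remainders
  have hsum : |∑ i, (Real.sqrt (ev i) - (1 + (ev i - 1)/2 - (ev i - 1)^2/8))| ≤ F^3 := by
    calc |∑ i, (Real.sqrt (ev i) - (1 + (ev i - 1)/2 - (ev i - 1)^2/8))|
        ≤ ∑ i, |Real.sqrt (ev i) - (1 + (ev i - 1)/2 - (ev i - 1)^2/8)| :=
          Finset.abs_sum_le_sum_abs _ _
      _ ≤ ∑ i, F * (ev i - 1)^2 := Finset.sum_le_sum fun i _ => htay i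
      _ = F * ∑ i, (ev i - 1)^2 := by rw [Finset.mul_sum]
      _ = F * F^2 := by rw [← hfrob]
      _ = F^3 := by ring
  -- algebraic expansion
  have hx0 : ∑ i, (ev i - 1) = 0 := by
    rw [Finset.sum_sub_distrib, htrC]
    simp
  have hexp : (1 / (n : ℝ)) * (hC.posSemidef.sqrt).trace - (1 - dC C / 8)
      = (1 / (n : ℝ)) * ∑ i, (Real.sqrt (ev i) - (1 + (ev i - 1)/2 - (ev i - 1)^2/8)) := by
    have htrS : (hC.posSemidef.sqrt).trace = ∑ i, Real.sqrt (ev i) := by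
      rw [hsqrt, key]
    have hsplit : ∑ i, (Real.sqrt (ev i) - (1 + (ev i - 1)/2 - (ev i - 1)^2/8))
        = (∑ i, Real.sqrt (ev i)) - ((n : ℝ) + (∑ i, (ev i - 1))/2 - (∑ i, (ev i - 1)^2)/8) := by
      rw [Finset.sum_sub_distrib]
      congr 1
      rw [Finset.sum_sub_distrib, Finset.sum_add_distrib, ← Finset.sum_div, ← Finset.sum_div]
      simp
    rw [htrS, hsplit, hx0, ← hfrob]
    have : dC C = (1 / (n : ℝ)) * F^2 := by rw [dC, hFdef]
    rw [this]
    field_simp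
    ring
  rw [hexp, abs_mul]
  have h1n : |(1 / (n : ℝ))| = 1 / (n : ℝ) := abs_of_pos (by positivity)
  rw [h1n]
  have hle : 1 / (n : ℝ) ≤ 1 := by
    rw [div_le_one hnpos]; exact_mod_cast hn
  calc (1 / (n : ℝ)) * |∑ i, (Real.sqrt (ev i) - (1 + (ev i - 1)/2 - (ev i - 1)^2/8))|
      ≤ 1 * F^3 := by
        have h2 : |∑ i, (Real.sqrt (ev i) - (1 + (ev i - 1)/2 - (ev i - 1)^2/8))| ≤ F^3 := hsum
        have h3 : (0:ℝ) ≤ |∑ i, (Real.sqrt (ev i) - (1 + (ev i - 1)/2 - (ev i - 1)^2/8))| :=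
          abs_nonneg _
        nlinarith
    _ = 1 * frobNorm (C - 1) ^ 3 := by rw [hFdef]
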